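/- Let α and β be algebraic numbers that are not conjugate over ℚ (in particular α ≠ β). Then |α − β| ≥ 1 / (2^(deg(α)·deg(β)) · M(α)^(deg(β)) · M(β)^(deg(α))), where M denotes the Mahler measure. -/

import Mathlib

open Polynomial IsDedekindDomain Multiset NumberField

section AUX

/-- product over a multiset product, separated variables -/
lemma aux_prod_product_map {ι κ M : Type*} [CommMonoid M] (s : Multiset ι) (t : Multiset κ)
    (F : ι → M) (G : κ → M) :
    ((s ×ˢ t).map fun p => F p.1 * G p.2).prod
      = (s.map F).prod ^ Multiset.card t * (t.map G).prod ^ Multiset.card s := by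
  induction s using Multiset.induction with
  | empty => simp
  | cons a s ih =>
      rw [Multiset.cons_product, Multiset.map_add, Multiset.prod_add, ih]
      simp only [Multiset.map_map, Function.comp]
      rw [Multiset.prod_map_mul]
      simp only [Multiset.map_const', Multiset.prod_replicate, Multiset.map_cons,
        Multiset.prod_cons, Multiset.card_cons]
      rw [mul_pow, pow_add, pow_one]
      ac_rfl

lemma aux_map_product {ι κ ι' κ' : Type*} (s : Multiset ι) (t : Multiset κ)
    (f : ι → ι') (g : κ → κ') :
    (s.map f) ×ˢ (t.map g) = (s ×ˢ t).map (Prod.map f g) := by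
  induction s using Multiset.induction with
  | empty => simp
  | cons a s ih =>
      rw [Multiset.map_cons, Multiset.cons_product, Multiset.cons_product, Multiset.map_add, ih,
        Multiset.map_map, Multiset.map_map]
      rfl

lemma aux_prod_map_le_real {ι : Type*} (m : Multiset ι) (f g : ι → ℝ)
    (h : ∀ x ∈ m, 0 ≤ f x ∧ f x ≤ g x) :
    (m.map f).prod ≤ (m.map g).prod := by
  induction m using Multiset.induction with
  | empty => simp
  | cons a s ih =>
      simp only [Multiset.map_cons, Multiset.prod_cons]
      have ha := h a (Multiset.mem_cons_self a s)
      have hs : ∀ x ∈ s, 0 ≤ f x ∧ f x ≤ g x := fun x hx => h x (Multiset.mem_cons_of_mem hx)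
      have h1 : (0:ℝ) ≤ (s.map f).prod :=
        Multiset.prod_nonneg (by intro x hx; obtain ⟨y, hy, rfl⟩ := Multiset.mem_map.mp hx; exact (hs y hy).1)
      exact mul_le_mul ha.2 (ih hs) h1 (le_trans ha.1 ha.2)

section GAUSS

variable {K Γ₀ : Type*} [Field K] [LinearOrderedCommGroupWithZero Γ₀]

lemma aux_gauss_step_le (v : Valuation K Γ₀) (q : K[X]) (a : K) (B : Γ₀)
    (ha : v a ≤ 1) (h : ∀ i, v (((X - C a) * q).coeff i) ≤ B) :
    ∀ i, v (q.coeff i) ≤ B := by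
  have key : ∀ i, q.coeff i = ((X - C a) * q).coeff (i + 1) + a * q.coeff (i + 1) := by
    intro i
    rw [sub_mul, Polynomial.coeff_sub, Polynomial.coeff_X_mul, Polynomial.coeff_C_mul]
    ring
  have aux : ∀ k i, q.natDegree + 1 ≤ i + k → v (q.coeff i) ≤ B := by
    intro k
    induction k with
    | zero =>
        intro i hi
        rw [Polynomial.coeff_eq_zero_of_natDegree_lt (by omega)]
        simpa using zero_le'
    | succ k ih =>
        intro i hi
        rw [key i]
        refine le_trans (v.map_add _ _) (max_le (h (i+1)) ?_)
        rw [v.map_mul]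
        calc v a * v (q.coeff (i+1)) ≤ 1 * v (q.coeff (i+1)) := mul_le_mul_left ha _
        _ = v (q.coeff (i+1)) := one_mul _
        _ ≤ B := ih (i+1) (by omega)
  exact fun i => aux (q.natDegree + 1) i (by omega)

lemma aux_gauss_step_ge (v : Valuation K Γ₀) (q : K[X]) (a : K) (B : Γ₀)
    (ha : 1 ≤ v a) (h : ∀ i, v (((X - C a) * q).coeff i) ≤ B) :
    ∀ i, v a * v (q.coeff i) ≤ B := by
  intro i
  induction i with
  | zero =>
      have e : ((X - C a) * q).coeff 0 = - (a * q.coeff 0) := by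
        rw [sub_mul, Polynomial.coeff_sub, Polynomial.coeff_C_mul]
        simp [Polynomial.coeff_X_mul_zero]
      have := h 0
      rw [e, v.map_neg, v.map_mul] at this
      exact this
  | succ i ih =>
      have e : a * q.coeff (i+1) = q.coeff i - ((X - C a) * q).coeff (i + 1) := by
        rw [sub_mul, Polynomial.coeff_sub, Polynomial.coeff_X_mul, Polynomial.coeff_C_mul]
        ring
      rw [← v.map_mul, e]
      refine le_trans (v.map_sub _ _) (max_le ?_ (h (i+1)))
      calc v (q.coeff i) = 1 * v (q.coeff i) := (one_mul _).symm
      _ ≤ v a * v (q.coeff i) := mul_le_mul_left ha _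
      _ ≤ B := ih

lemma aux_gauss_main (v : Valuation K Γ₀) (m : Multiset K) (c : K) (B : Γ₀)
    (h : ∀ i, v ((C c * (m.map fun a => X - C a).prod).coeff i) ≤ B) :
    v c * (m.map fun a => max 1 (v a)).prod ≤ B := by
  induction m using Multiset.induction generalizing B with
  | empty =>
      have := h 0
      simpa using this
  | cons a s ih =>
      have hre : C c * ((a ::ₘ s).map fun x => X - C x).prod
          = (X - C a) * (C c * (s.map fun x => X - C x).prod) := by
        rw [Multiset.map_cons, Multiset.prod_cons]; ring
      rw [Multiset.map_cons, Multiset.prod_cons]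
      rcases le_total (v a) 1 with hva | hva
      · rw [max_eq_left hva, one_mul]
        exact ih B (fun i => aux_gauss_step_le v _ a B hva (fun j => by rw [← hre]; exact h j) i)
      · rw [max_eq_right hva]
        have hne : v a ≠ 0 := by
          intro h0; rw [h0] at hva; exact absurd (le_antisymm hva zero_le') one_ne_zero
        have step := aux_gauss_step_ge v (C c * (s.map fun x => X - C x).prod) a B hva
          (fun j => by rw [← hre]; exact h j)
        have h2 : ∀ i, v ((C c * (s.map fun x => X - C x).prod).coeff i) ≤ (v a)⁻¹ * B := by
          intro i
          have := step i
          calc v ((C c * (s.map fun x => X - C x).prod).coeff i)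
              = (v a)⁻¹ * (v a * v ((C c * (s.map fun x => X - C x).prod).coeff i)) := by
                rw [← mul_assoc, inv_mul_cancel₀ hne, one_mul]
          _ ≤ (v a)⁻¹ * B := mul_le_mul_right this _
        have := ih ((v a)⁻¹ * B) h2
        calc v c * (v a * (s.map fun x => max 1 (v x)).prod)
            = v a * (v c * (s.map fun x => max 1 (v x)).prod) := by ac_rfl
        _ ≤ v a * ((v a)⁻¹ * B) := mul_le_mul_right this _
        _ = B := by rw [← mul_assoc, mul_inv_cancel₀ hne, one_mul]

end GAUSS

lemma aux_int_of_integral {K : Type*} [Field K] [NumberField K] (q : ℚ) (x : 𝓞 K)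
    (hx : algebraMap (𝓞 K) K x = algebraMap ℚ K q) : ∃ n : ℤ, (n : ℚ) = q := by
  have hint : IsIntegral ℤ (algebraMap ℚ K q) := hx ▸ x.isIntegral_coe
  have h2 : IsIntegral ℤ q := (isIntegral_algebraMap_iff (algebraMap ℚ K).injective).mp hint
  obtain ⟨n, hn⟩ := IsIntegrallyClosed.isIntegral_iff.mp h2
  exact ⟨n, by simpa using hn⟩

lemma aux_rat_of_val {K : Type*} [Field K] [NumberField K] (r : ℚ)
    (h : ∀ v : HeightOneSpectrum (𝓞 K), (v.valuation K) (algebraMap ℚ K r) ≤ 1) :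
    ∃ n : ℤ, (n : ℚ) = r := by
  have hden : r.den = 1 := by
    by_contra hden
    obtain ⟨p, pp, hpd⟩ := Nat.exists_prime_and_dvd hden
    -- p is not a unit in 𝓞 K
    have hpu : ¬ IsUnit ((p : ℕ) : 𝓞 K) := by
      intro hu
      obtain ⟨w, hw⟩ := hu.exists_left_inv
      have hwK : algebraMap (𝓞 K) K w = algebraMap ℚ K ((p : ℚ))⁻¹ := by
        have hp0 : ((p : ℕ) : K) ≠ 0 := by
          exact_mod_cast Nat.cast_ne_zero.mpr pp.ne_zero
        have := congrArg (algebraMap (𝓞 K) K) hw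
        rw [map_mul, map_one, map_natCast] at this
        rw [map_inv₀, map_natCast]
        field_simp
        linear_combination this
      obtain ⟨n, hn⟩ := aux_int_of_integral _ w hwK
      have hp1 : ((n * p : ℤ) : ℚ) = 1 := by
        push_cast [hn]
        rw [inv_mul_cancel₀ (show ((p : ℕ) : ℚ) ≠ 0 from Nat.cast_ne_zero.mpr pp.ne_zero)]
      have h2 : (n * (p : ℤ)) = 1 := by exact_mod_cast hp1
      have h3 : IsUnit ((p : ℕ) : ℤ) := IsUnit.of_mul_eq_one n (by rw [mul_comm] at h2; exact h2)
      rw [Int.isUnit_iff] at h3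
      have := pp.two_le
      omega
    -- find a maximal ideal above p
    have hspan : Ideal.span {((p : ℕ) : 𝓞 K)} ≠ ⊤ := by
      rw [Ne, Ideal.span_singleton_eq_top]; exact hpu
    obtain ⟨P, hPmax, hPle⟩ := Ideal.exists_le_maximal _ hspan
    have hpmem : ((p : ℕ) : 𝓞 K) ∈ P := hPle (Ideal.mem_span_singleton_self _)
    have hPbot : P ≠ ⊥ := by
      intro hbot
      rw [hbot, Ideal.mem_bot] at hpmem
      have : ((p : ℕ) : K) = 0 := by
        rw [← map_natCast (algebraMap (𝓞 K) K), hpmem, _root_.map_zero]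
      exact pp.ne_zero (by exact_mod_cast this)
    let v : HeightOneSpectrum (𝓞 K) := ⟨P, hPmax.isPrime, hPbot⟩
    -- all integers have valuation ≤ 1
    have hints : ∀ n : ℤ, (v.valuation K) ((n : ℤ) : K) ≤ 1 := by
      intro n
      rw [show ((n : ℤ) : K) = algebraMap (𝓞 K) K ((n : ℤ) : 𝓞 K) by rw [map_intCast]]
      exact v.valuation_le_one _
    have hvp : (v.valuation K) ((p : ℕ) : K) < 1 := by
      rw [show ((p : ℕ) : K) = algebraMap (𝓞 K) K ((p : ℕ) : 𝓞 K) by rw [map_natCast],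
        HeightOneSpectrum.valuation_of_algebraMap]
      rw [HeightOneSpectrum.intValuation_lt_one_iff_dvd]
      exact Ideal.dvd_iff_le.mpr hPle
    -- numerator valuation is 1
    have hnum : 1 ≤ (v.valuation K) ((r.num : ℤ) : K) := by
      have hc : IsCoprime (r.num) ((p : ℕ) : ℤ) := by
        rw [Int.isCoprime_iff_gcd_eq_one]
        exact Nat.Coprime.coprime_dvd_right hpd r.reduced
      obtain ⟨u, w, huw⟩ := hc
      by_contra hlt
      rw [not_le] at hlt
      have h1 : ((u * r.num + w * (p : ℤ) : ℤ) : K) = 1 := by rw [huw]; norm_num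
      have : (v.valuation K) ((u * r.num + w * (p : ℤ) : ℤ) : K) < 1 := by
        push_cast
        refine lt_of_le_of_lt ((v.valuation K).map_add _ _) (max_lt ?_ ?_)
        · rw [map_mul]
          calc (v.valuation K) ((u : ℤ) : K) * (v.valuation K) ((r.num : ℤ) : K)
              ≤ 1 * (v.valuation K) ((r.num : ℤ) : K) := mul_le_mul_left (hints u) _
          _ = (v.valuation K) ((r.num : ℤ) : K) := one_mul _
          _ < 1 := hlt
        · rw [map_mul]
          calc (v.valuation K) ((w : ℤ) : K) * (v.valuation K) ((p : ℕ) : K)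
              ≤ 1 * (v.valuation K) ((p : ℕ) : K) := mul_le_mul_left (hints w) _
          _ = (v.valuation K) ((p : ℕ) : K) := one_mul _
          _ < 1 := hvp
      rw [h1, map_one] at this
      exact absurd this (lt_irrefl _)
    -- denominator valuation < 1
    have hdenv : (v.valuation K) ((r.den : ℕ) : K) < 1 := by
      obtain ⟨d, hd⟩ := hpd
      have : ((r.den : ℕ) : K) = ((p : ℕ) : K) * ((d : ℕ) : K) := by
        rw [hd]; push_cast; ring
      rw [this, map_mul]
      calc (v.valuation K) ((p : ℕ) : K) * (v.valuation K) ((d : ℕ) : K)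
          ≤ (v.valuation K) ((p : ℕ) : K) * 1 := by
            refine mul_le_mul_right ?_ _
            have := hints (d : ℤ)
            push_cast at this ⊢
            exact this
      _ = (v.valuation K) ((p : ℕ) : K) := mul_one _
      _ < 1 := hvp
    -- contradiction
    have hrel : algebraMap ℚ K r * ((r.den : ℕ) : K) = ((r.num : ℤ) : K) := by
      have hd0 : (r.den : ℚ) ≠ 0 := by exact_mod_cast r.den_ne_zero
      have : (r : ℚ) * (r.den : ℚ) = (r.num : ℚ) :=
        (eq_div_iff hd0).mp (Rat.num_div_den r).symm
      calc algebraMap ℚ K r * ((r.den : ℕ) : K)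
          = algebraMap ℚ K (r * (r.den : ℚ)) := by rw [map_mul, map_natCast]
      _ = algebraMap ℚ K ((r.num : ℚ)) := by rw [this]
      _ = ((r.num : ℤ) : K) := by rw [map_intCast]
    have : (1 : WithZero (Multiplicative ℤ)) ≤ (v.valuation K) (algebraMap ℚ K r) * (v.valuation K) ((r.den : ℕ) : K) := by
      rw [← map_mul, hrel]; exact hnum
    have hcontra : (v.valuation K) (algebraMap ℚ K r) * (v.valuation K) ((r.den : ℕ) : K) < 1 := by
      calc (v.valuation K) (algebraMap ℚ K r) * (v.valuation K) ((r.den : ℕ) : K)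
          ≤ 1 * (v.valuation K) ((r.den : ℕ) : K) := mul_le_mul_left (h v) _
      _ = (v.valuation K) ((r.den : ℕ) : K) := one_mul _
      _ < 1 := hdenv
    exact absurd this (not_le.mpr hcontra)
  refine ⟨r.num, ?_⟩
  conv_rhs => rw [← Rat.num_div_den r]
  rw [hden]
  norm_num

end AUX

section MAIN

set_option maxHeartbeats 1000000 in
/-- Liouville-type separation: if `α` and `β` are non-conjugate algebraic numbers
(distinct minimal polynomials over `ℚ`), then
`|α - β| ≥ 1 / (2 ^ (deg α * deg β) * M(α) ^ deg β * M(β) ^ deg α)`,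
where `M(γ)` is the Mahler measure of `γ`, computed from the primitive integer
minimal polynomial of `γ` (with positive leading coefficient): the absolute value of
its leading coefficient times the product of `max 1 |γ_i|` over its complex roots. -/
theorem stmt_9 (α β : ℂ) (hα : IsAlgebraic ℚ α) (hβ : IsAlgebraic ℚ β)
    (hnc : minpoly ℚ α ≠ minpoly ℚ β)
    (fα fβ : Polynomial ℤ)
    (hfαprim : fα.IsPrimitive) (hfαlead : 0 < fα.leadingCoeff)
    (hfα : fα.map (Int.castRingHom ℚ) = (fα.leadingCoeff : ℚ) • minpoly ℚ α)
    (hfβprim : fβ.IsPrimitive) (hfβlead : 0 < fβ.leadingCoeff)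
    (hfβ : fβ.map (Int.castRingHom ℚ) = (fβ.leadingCoeff : ℚ) • minpoly ℚ β)
    (Mα Mβ : ℝ)
    (hMα : Mα = |(fα.leadingCoeff : ℝ)| * ((fα.aroots ℂ).map (fun z => max 1 (‖z‖))).prod)
    (hMβ : Mβ = |(fβ.leadingCoeff : ℝ)| * ((fβ.aroots ℂ).map (fun z => max 1 (‖z‖))).prod)
    (dα dβ : ℕ) (hdα : dα = (minpoly ℚ α).natDegree) (hdβ : dβ = (minpoly ℚ β).natDegree) :
    ‖α - β‖ ≥ 1 / (2 ^ (dα * dβ) * Mα ^ dβ * Mβ ^ dα) := by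
  have hαint : IsIntegral ℚ α := hα.isIntegral
  have hβint : IsIntegral ℚ β := hβ.isIntegral
  set cα : ℤ := fα.leadingCoeff with hcα
  set cβ : ℤ := fβ.leadingCoeff with hcβ
  set pα : ℚ[X] := minpoly ℚ α with hpα
  set pβ : ℚ[X] := minpoly ℚ β with hpβ
  have mα : pα.Monic := minpoly.monic hαint
  have mβ : pβ.Monic := minpoly.monic hβint
  have hpα0 : pα ≠ 0 := minpoly.ne_zero hαint
  have hpβ0 : pβ ≠ 0 := minpoly.ne_zero hβint
  have hirrα : Irreducible pα := minpoly.irreducible hαint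
  have hirrβ : Irreducible pβ := minpoly.irreducible hβint
  set g : ℚ[X] := pα * pβ with hgdef
  have hg0 : g ≠ 0 := mul_ne_zero hpα0 hpβ0
  set K := g.SplittingField with hKdef
  haveI : CharZero K := charZero_of_injective_algebraMap (algebraMap ℚ K).injective
  haveI : NumberField K := { to_charZero := inferInstance, to_finiteDimensional := inferInstance }
  have hcop : IsCoprime pα pβ := by
    rw [hirrα.coprime_iff_not_dvd]
    intro hdvd
    exact hnc (Polynomial.eq_of_monic_of_associated mα mβ
      (associated_of_dvd_dvd hdvd (hirrα.dvd_symm hirrβ hdvd)))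
  have hgsep : g.Separable := (hirrα.separable).mul (hirrβ.separable) hcop
  haveI : g.IsSplittingField ℚ K := Polynomial.IsSplittingField.splittingField g
  haveI : IsGalois ℚ K := IsGalois.of_separable_splitting_field hgsep
  have hsg : Splits (g.map (algebraMap ℚ K)) := SplittingField.splits g
  have hsα : Splits (pα.map (algebraMap ℚ K)) :=
    hsg.of_dvd (Polynomial.map_ne_zero hg0) (Polynomial.map_dvd _ (dvd_mul_right pα pβ))
  have hsβ : Splits (pβ.map (algebraMap ℚ K)) :=
    hsg.of_dvd (Polynomial.map_ne_zero hg0) (Polynomial.map_dvd _ (dvd_mul_left pβ pα))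
  set A : Multiset K := pα.aroots K with hA
  set B : Multiset K := pβ.aroots K with hB
  have cardA : Multiset.card A = dα := by
    rw [hA, aroots_def, ← hsα.natDegree_eq_card_roots, natDegree_map, hdα]
  have cardB : Multiset.card B = dβ := by
    rw [hB, aroots_def, ← hsβ.natDegree_eq_card_roots, natDegree_map, hdβ]
  -- factorizations over K
  have hprodα : pα.map (algebraMap ℚ K) = (A.map fun a => X - C a).prod := by
    conv_lhs => rw [hsα.eq_prod_roots_of_monic (mα.map _)]
  have hprodβ : pβ.map (algebraMap ℚ K) = (B.map fun a => X - C a).prod := by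
    conv_lhs => rw [hsβ.eq_prod_roots_of_monic (mβ.map _)]
  have hintK : algebraMap ℤ K = (algebraMap ℚ K).comp (Int.castRingHom ℚ) :=
    RingHom.ext_int _ _
  have hfαK : fα.map (algebraMap ℤ K) = C ((cα : ℤ) : K) * (A.map fun a => X - C a).prod := by
    rw [hintK, ← Polynomial.map_map, hfα, Polynomial.map_smul, smul_eq_C_mul, hprodα,
      map_intCast (algebraMap ℚ K)]
  have hfβK : fβ.map (algebraMap ℤ K) = C ((cβ : ℤ) : K) * (B.map fun a => X - C a).prod := by
    rw [hintK, ← Polynomial.map_map, hfβ, Polynomial.map_smul, smul_eq_C_mul, hprodβ,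
      map_intCast (algebraMap ℚ K)]
  -- the resultant-like element
  set T : K := ((A ×ˢ B).map fun p => p.1 - p.2).prod with hT
  set s : K := algebraMap ℚ K ((cα : ℚ) ^ dβ * (cβ : ℚ) ^ dα) * T with hs
  -- pushing T through ℚ-algebra maps
  have htrans : ∀ {L : Type} [Field L] [Algebra ℚ L] (φ : K →ₐ[ℚ] L),
      φ T = ((((A.map φ) ×ˢ (B.map φ))).map fun p => p.1 - p.2).prod := by
    intro L _ _ φ
    rw [hT, map_multiset_prod, Multiset.map_map, aux_map_product, Multiset.map_map]
    congr 1
    apply Multiset.map_congr rfl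
    intro p _
    simp [Prod.map, map_sub]
  -- automorphisms permute the roots
  have hfixroots : ∀ (σ : K ≃ₐ[ℚ] K) (p : ℚ[X]), Splits (p.map (algebraMap ℚ K)) →
      (p.aroots K).map σ = p.aroots K := by
    intro σ p hp
    rw [aroots_def]
    have hcomp : (σ : K →+* K).comp (algebraMap ℚ K) = algebraMap ℚ K := by
      ext q
      simp
    conv_rhs => rw [show Polynomial.map (algebraMap ℚ K) p
      = Polynomial.map (σ : K →+* K) (Polynomial.map (algebraMap ℚ K) p) by
        rw [Polynomial.map_map, hcomp]]
    rw [hp.roots_map _]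
    rfl
  have hfix : ∀ σ : K ≃ₐ[ℚ] K, σ s = s := by
    intro σ
    rw [hs, map_mul, AlgEquiv.commutes]
    congr 1
    have := htrans (L := K) σ.toAlgHom
    change σ T = ((((A.map σ) ×ˢ (B.map σ))).map fun p => p.1 - p.2).prod at this
    rw [this, hA, hB, hfixroots σ pα hsα, hfixroots σ pβ hsβ]
  -- s is rational
  have hbot : IntermediateField.fixedField (⊤ : Subgroup (K ≃ₐ[ℚ] K)) = ⊥ :=
    ((IsGalois.tfae (F := ℚ) (E := K)).out 0 1).mp (inferInstance : IsGalois ℚ K)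
  have hmem : s ∈ IntermediateField.fixedField (⊤ : Subgroup (K ≃ₐ[ℚ] K)) := by
    intro σ
    exact hfix σ
  rw [hbot] at hmem
  obtain ⟨r, hrs⟩ := IntermediateField.mem_bot.mp hmem
  -- nonvanishing
  have hT0 : T ≠ 0 := by
    rw [hT]
    refine Multiset.prod_ne_zero ?_
    intro h0
    obtain ⟨p, hp, hval⟩ := Multiset.mem_map.mp h0
    obtain ⟨hp1, hp2⟩ := Multiset.mem_product.mp hp
    have heq : p.1 = p.2 := by
      have := hval.symm
      rwa [eq_comm, sub_eq_zero] at this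
    have e1 : aeval p.1 pα = 0 := ((mem_aroots).mp hp1).2
    have e2 : aeval p.1 pβ = 0 := by rw [heq]; exact ((mem_aroots).mp hp2).2
    exact hnc ((minpoly.eq_of_irreducible_of_monic hirrα e1 mα).trans
      (minpoly.eq_of_irreducible_of_monic hirrβ e2 mβ).symm)
  have hcc0 : ((cα : ℚ) ^ dβ * (cβ : ℚ) ^ dα) ≠ 0 := by positivity
  have hs0 : s ≠ 0 := by
    rw [hs]
    refine mul_ne_zero ?_ hT0
    intro h0
    exact hcc0 ((algebraMap ℚ K).injective (by rw [h0, _root_.map_zero]))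
  have hr0 : r ≠ 0 := by
    rintro rfl
    rw [_root_.map_zero] at hrs
    exact hs0 hrs.symm
  -- v-adic bounds
  have hval_le : ∀ v : HeightOneSpectrum (𝓞 K), (v.valuation K) s ≤ 1 := by
    intro v
    have hints : ∀ n : ℤ, (v.valuation K) ((n : ℤ) : K) ≤ 1 := by
      intro n
      rw [show ((n : ℤ) : K) = algebraMap (𝓞 K) K ((n : ℤ) : 𝓞 K) by rw [map_intCast]]
      exact v.valuation_le_one _
    have hcoeffα : ∀ i, (v.valuation K) ((C ((cα : ℤ) : K) * (A.map fun a => X - C a).prod).coeff i) ≤ 1 := by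
      intro i
      rw [← hfαK, coeff_map, eq_intCast (algebraMap ℤ K)]
      exact hints _
    have hcoeffβ : ∀ i, (v.valuation K) ((C ((cβ : ℤ) : K) * (B.map fun a => X - C a).prod).coeff i) ≤ 1 := by
      intro i
      rw [← hfβK, coeff_map, eq_intCast (algebraMap ℤ K)]
      exact hints _
    have hGα : (v.valuation K) ((cα : ℤ) : K) * (A.map fun a => max 1 ((v.valuation K) a)).prod ≤ 1 :=
      aux_gauss_main (v.valuation K) A _ 1 hcoeffα
    have hGβ : (v.valuation K) ((cβ : ℤ) : K) * (B.map fun a => max 1 ((v.valuation K) a)).prod ≤ 1 :=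
      aux_gauss_main (v.valuation K) B _ 1 hcoeffβ
    have hTle : (v.valuation K) T ≤ (A.map fun a => max 1 ((v.valuation K) a)).prod ^ dβ
        * (B.map fun a => max 1 ((v.valuation K) a)).prod ^ dα := by
      rw [hT, map_multiset_prod, Multiset.map_map]
      calc ((A ×ˢ B).map fun p => (v.valuation K) (p.1 - p.2)).prod
          ≤ ((A ×ˢ B).map fun p => max 1 ((v.valuation K) p.1) * max 1 ((v.valuation K) p.2)).prod := by
            refine Multiset.prod_map_le_prod_map _ _ ?_
            intro p _
            refine le_trans ((v.valuation K).map_sub _ _) (max_le ?_ ?_)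
            · calc (v.valuation K) p.1 ≤ max 1 ((v.valuation K) p.1) := le_max_right _ _
              _ = max 1 ((v.valuation K) p.1) * 1 := (mul_one _).symm
              _ ≤ max 1 ((v.valuation K) p.1) * max 1 ((v.valuation K) p.2) :=
                  mul_le_mul_right (le_max_left _ _) _
            · calc (v.valuation K) p.2 ≤ max 1 ((v.valuation K) p.2) := le_max_right _ _
              _ = 1 * max 1 ((v.valuation K) p.2) := (one_mul _).symm
              _ ≤ max 1 ((v.valuation K) p.1) * max 1 ((v.valuation K) p.2) :=
                  mul_le_mul_left (le_max_left _ _) _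
      _ = (A.map fun a => max 1 ((v.valuation K) a)).prod ^ Multiset.card B
            * (B.map fun a => max 1 ((v.valuation K) a)).prod ^ Multiset.card A :=
          aux_prod_product_map A B (fun a => max 1 ((v.valuation K) a)) (fun a => max 1 ((v.valuation K) a))
      _ = (A.map fun a => max 1 ((v.valuation K) a)).prod ^ dβ
            * (B.map fun a => max 1 ((v.valuation K) a)).prod ^ dα := by
          rw [cardA, cardB]
    have hsval : (v.valuation K) s = (v.valuation K) ((cα : ℤ) : K) ^ dβ * (v.valuation K) ((cβ : ℤ) : K) ^ dα
        * (v.valuation K) T := by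
      have hx : algebraMap ℚ K ((cα : ℚ) ^ dβ * (cβ : ℚ) ^ dα)
          = ((cα : ℤ) : K) ^ dβ * ((cβ : ℤ) : K) ^ dα := by
        rw [map_mul, map_pow, map_pow, map_intCast, map_intCast]
      rw [hs, map_mul, hx, map_mul, map_pow, map_pow]
    rw [hsval]
    calc (v.valuation K) ((cα : ℤ) : K) ^ dβ * (v.valuation K) ((cβ : ℤ) : K) ^ dα * (v.valuation K) T
        ≤ (v.valuation K) ((cα : ℤ) : K) ^ dβ * (v.valuation K) ((cβ : ℤ) : K) ^ dα
          * ((A.map fun a => max 1 ((v.valuation K) a)).prod ^ dβ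
            * (B.map fun a => max 1 ((v.valuation K) a)).prod ^ dα) := mul_le_mul_right hTle _
    _ = ((v.valuation K) ((cα : ℤ) : K) * (A.map fun a => max 1 ((v.valuation K) a)).prod) ^ dβ
          * ((v.valuation K) ((cβ : ℤ) : K) * (B.map fun a => max 1 ((v.valuation K) a)).prod) ^ dα := by
        rw [mul_pow, mul_pow]
        ac_rfl
    _ ≤ 1 := mul_le_one' (pow_le_one' hGα _) (pow_le_one' hGβ _)
  have hrval : ∀ v : HeightOneSpectrum (𝓞 K), (v.valuation K) (algebraMap ℚ K r) ≤ 1 := by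
    intro v
    rw [hrs]
    exact hval_le v
  obtain ⟨n, hn⟩ := aux_rat_of_val r hrval
  have hn0 : n ≠ 0 := by
    rintro rfl
    rw [Int.cast_zero] at hn
    exact hr0 hn.symm
  have hr1 : (1 : ℝ) ≤ |(r : ℝ)| := by
    rw [← hn]
    push_cast
    rw [← Int.cast_abs]
    exact_mod_cast Int.one_le_abs hn0
  -- the complex side
  set ι : K →ₐ[ℚ] ℂ := SplittingField.lift g (IsAlgClosed.splits (g.map (algebraMap ℚ ℂ))) with hι
  have hrootsι : ∀ p : ℚ[X], Splits (p.map (algebraMap ℚ K)) → (p.aroots K).map ι = p.aroots ℂ := by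
    intro p hp
    rw [aroots_def, aroots_def, show Polynomial.map (algebraMap ℚ ℂ) p
      = Polynomial.map (ι : K →+* ℂ) (Polynomial.map (algebraMap ℚ K) p) by
        rw [Polynomial.map_map]
        congr 1
        ext q
        simp,
      hp.roots_map _]
    rfl
  set Ac : Multiset ℂ := pα.aroots ℂ with hAc
  set Bc : Multiset ℂ := pβ.aroots ℂ with hBc
  have hTι : ι T = ((Ac ×ˢ Bc).map fun p => p.1 - p.2).prod := by
    rw [htrans (L := ℂ) ι, hrootsι pα hsα, hrootsι pβ hsβ]
  have hrc : algebraMap ℚ ℂ r = algebraMap ℚ ℂ ((cα : ℚ) ^ dβ * (cβ : ℚ) ^ dα)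
      * ((Ac ×ˢ Bc).map fun p => p.1 - p.2).prod := by
    have h0 := congrArg ι hrs
    rwa [ι.commutes, hs, map_mul, ι.commutes, hTι] at h0
  have habs : |(r : ℝ)| = |(cα : ℝ)| ^ dβ * |(cβ : ℝ)| ^ dα
      * ((Ac ×ˢ Bc).map fun p => ‖p.1 - p.2‖).prod := by
    have h1 : ‖algebraMap ℚ ℂ r‖ = |(r : ℝ)| := by
      rw [eq_ratCast]
      exact Complex.norm_ratCast r
    have h2 : algebraMap ℚ ℂ ((cα : ℚ) ^ dβ * (cβ : ℚ) ^ dα)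
        = ((cα : ℤ) : ℂ) ^ dβ * ((cβ : ℤ) : ℂ) ^ dα := by
      rw [map_mul, map_pow, map_pow, map_intCast, map_intCast]
    rw [← h1, hrc, norm_mul, h2, norm_mul, norm_pow, norm_pow, Complex.norm_intCast,
      Complex.norm_intCast]
    congr 1
    exact (map_multiset_prod (normHom (α := ℂ)) _).trans (by rw [Multiset.map_map]; rfl)
  -- memberships
  have hαmem : α ∈ Ac := by
    rw [hAc, hpα]
    exact (mem_aroots).mpr ⟨minpoly.ne_zero hαint, minpoly.aeval ℚ α⟩
  have hβmem : β ∈ Bc := by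
    rw [hBc, hpβ]
    exact (mem_aroots).mpr ⟨minpoly.ne_zero hβint, minpoly.aeval ℚ β⟩
  have hpair : ((α, β) : ℂ × ℂ) ∈ Ac ×ˢ Bc := Multiset.mem_product.mpr ⟨hαmem, hβmem⟩
  set Rm : Multiset (ℂ × ℂ) := (Ac ×ˢ Bc).erase (α, β) with hRm
  have hconsR : Ac ×ˢ Bc = (α, β) ::ₘ Rm := (Multiset.cons_erase hpair).symm
  set m : ℂ → ℝ := (fun z => max 1 (‖z‖)) with hm
  have hm1 : ∀ z : ℂ, 1 ≤ m z := fun z => le_max_left _ _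
  have hm0 : ∀ z : ℂ, 0 ≤ m z := fun z => le_trans zero_le_one (hm1 z)
  have cardAc : Multiset.card Ac = dα := by
    rw [hAc, aroots_def, ← (IsAlgClosed.splits (pα.map (algebraMap ℚ ℂ))).natDegree_eq_card_roots,
      natDegree_map, hdα]
  have cardBc : Multiset.card Bc = dβ := by
    rw [hBc, aroots_def, ← (IsAlgClosed.splits (pβ.map (algebraMap ℚ ℂ))).natDegree_eq_card_roots,
      natDegree_map, hdβ]
  set PA : ℝ := (Ac.map m).prod with hPA
  set PB : ℝ := (Bc.map m).prod with hPB
  have hPApos : 0 < PA := Multiset.prod_pos (by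
    intro x hx
    obtain ⟨z, _, rfl⟩ := Multiset.mem_map.mp hx
    exact lt_of_lt_of_le zero_lt_one (hm1 z))
  have hPBpos : 0 < PB := Multiset.prod_pos (by
    intro x hx
    obtain ⟨z, _, rfl⟩ := Multiset.mem_map.mp hx
    exact lt_of_lt_of_le zero_lt_one (hm1 z))
  -- the full 2mm product
  have hFsplit : ((Ac ×ˢ Bc).map fun p => 2 * m p.1 * m p.2).prod
      = 2 ^ (dα * dβ) * PA ^ dβ * PB ^ dα := by
    have e1 : ((Ac ×ˢ Bc).map fun p => (2 * m p.1) * m p.2).prod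
        = ((Ac.map fun a => 2 * m a).prod) ^ Multiset.card Bc
          * ((Bc.map m).prod) ^ Multiset.card Ac :=
      aux_prod_product_map Ac Bc (fun a => 2 * m a) m
    have e2 : (Ac.map fun a => 2 * m a).prod = 2 ^ Multiset.card Ac * PA := by
      rw [hPA, show (fun a : ℂ => 2 * m a) = fun a : ℂ => (fun _ : ℂ => (2:ℝ)) a * m a from rfl,
        Multiset.prod_map_mul, Multiset.map_const', Multiset.prod_replicate]
    calc ((Ac ×ˢ Bc).map fun p => 2 * m p.1 * m p.2).prod
        = ((Ac.map fun a => 2 * m a).prod) ^ Multiset.card Bc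
          * ((Bc.map m).prod) ^ Multiset.card Ac := e1
    _ = (2 ^ Multiset.card Ac * PA) ^ Multiset.card Bc * PB ^ Multiset.card Ac := by
        rw [e2, hPB]
    _ = 2 ^ (dα * dβ) * PA ^ dβ * PB ^ dα := by
        rw [cardAc, cardBc, mul_pow, ← pow_mul]
  -- pointwise bounds on the remaining factors
  have hQle : (Rm.map fun p => ‖p.1 - p.2‖).prod
      ≤ (Rm.map fun p => 2 * m p.1 * m p.2).prod := by
    refine aux_prod_map_le_real _ _ _ ?_
    intro p _
    refine ⟨norm_nonneg _, ?_⟩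
    calc ‖p.1 - p.2‖ = ‖p.1 - p.2‖ := rfl
    _ ≤ ‖p.1‖ + ‖p.2‖ := norm_sub_le _ _
    _ = ‖p.1‖ + ‖p.2‖ := rfl
    _ ≤ m p.1 + m p.2 := add_le_add (le_max_right _ _) (le_max_right _ _)
    _ ≤ 2 * m p.1 * m p.2 := by nlinarith [hm1 p.1, hm1 p.2, hm0 p.1, hm0 p.2]
  have hRmF : (2 * m α * m β) * (Rm.map fun p => 2 * m p.1 * m p.2).prod
      = 2 ^ (dα * dβ) * PA ^ dβ * PB ^ dα := by
    rw [← hFsplit, hconsR, Multiset.map_cons, Multiset.prod_cons]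
  have hRmnonneg : 0 ≤ (Rm.map fun p => 2 * m p.1 * m p.2).prod := by
    refine Multiset.prod_nonneg ?_
    intro x hx
    obtain ⟨p, _, rfl⟩ := Multiset.mem_map.mp hx
    have := hm0 p.1; have := hm0 p.2
    positivity
  have h2mm : 2 ≤ 2 * m α * m β := by nlinarith [hm1 α, hm1 β]
  have hRmle : (Rm.map fun p => 2 * m p.1 * m p.2).prod
      ≤ (2 ^ (dα * dβ) * PA ^ dβ * PB ^ dα) / 2 := by
    rw [le_div_iff₀ (by norm_num : (0:ℝ) < 2), ← hRmF]
    calc (Rm.map fun p => 2 * m p.1 * m p.2).prod * 2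
        = 2 * (Rm.map fun p => 2 * m p.1 * m p.2).prod := mul_comm _ _
    _ ≤ (2 * m α * m β) * (Rm.map fun p => 2 * m p.1 * m p.2).prod :=
        mul_le_mul_of_nonneg_right h2mm hRmnonneg
  have hPdecomp : ((Ac ×ˢ Bc).map fun p => ‖p.1 - p.2‖).prod
      = ‖α - β‖ * (Rm.map fun p => ‖p.1 - p.2‖).prod := by
    rw [hconsR, Multiset.map_cons, Multiset.prod_cons]
  -- relate to the Mahler measures
  have hcα0 : ((cα : ℤ) : ℝ) ≠ 0 := Int.cast_ne_zero.mpr (ne_of_gt hfαlead)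
  have hcβ0 : ((cβ : ℤ) : ℝ) ≠ 0 := Int.cast_ne_zero.mpr (ne_of_gt hfβlead)
  have harootsα : fα.aroots ℂ = Ac := by
    rw [hAc, aroots_def, aroots_def,
      show Polynomial.map (algebraMap ℤ ℂ) fα
        = algebraMap ℚ ℂ ((cα : ℚ)) • Polynomial.map (algebraMap ℚ ℂ) pα by
          rw [show algebraMap ℤ ℂ = (algebraMap ℚ ℂ).comp (Int.castRingHom ℚ) from
            RingHom.ext_int _ _, ← Polynomial.map_map, hfα, Polynomial.map_smul]]
    refine roots_smul_nonzero _ ?_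
    rw [map_intCast]
    exact_mod_cast hcα0
  have harootsβ : fβ.aroots ℂ = Bc := by
    rw [hBc, aroots_def, aroots_def,
      show Polynomial.map (algebraMap ℤ ℂ) fβ
        = algebraMap ℚ ℂ ((cβ : ℚ)) • Polynomial.map (algebraMap ℚ ℂ) pβ by
          rw [show algebraMap ℤ ℂ = (algebraMap ℚ ℂ).comp (Int.castRingHom ℚ) from
            RingHom.ext_int _ _, ← Polynomial.map_map, hfβ, Polynomial.map_smul]]
    refine roots_smul_nonzero _ ?_
    rw [map_intCast]
    exact_mod_cast hcβ0
  have hMαPA : Mα = |((cα : ℤ) : ℝ)| * PA := by rw [hMα, harootsα, hPA, hm]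
  have hMβPB : Mβ = |((cβ : ℤ) : ℝ)| * PB := by rw [hMβ, harootsβ, hPB, hm]
  have hMαpos : 0 < Mα := by
    rw [hMαPA]
    exact mul_pos (abs_pos.mpr hcα0) hPApos
  have hMβpos : 0 < Mβ := by
    rw [hMβPB]
    exact mul_pos (abs_pos.mpr hcβ0) hPBpos
  -- assemble the final chain
  set Q : ℝ := (Rm.map fun p => ‖p.1 - p.2‖).prod with hQ
  have hQnonneg : 0 ≤ Q := by
    refine Multiset.prod_nonneg ?_
    intro x hx
    obtain ⟨p, _, rfl⟩ := Multiset.mem_map.mp hx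
    exact norm_nonneg _
  have step1 : 1 ≤ |((cα : ℤ) : ℝ)| ^ dβ * |((cβ : ℤ) : ℝ)| ^ dα * (‖α - β‖ * Q) := by
    rw [← hPdecomp, ← habs]
    exact hr1
  have hXpos : (0:ℝ) < 2 ^ (dα * dβ) * Mα ^ dβ * Mβ ^ dα := by positivity
  have step2 : |((cα : ℤ) : ℝ)| ^ dβ * |((cβ : ℤ) : ℝ)| ^ dα * (‖α - β‖ * Q)
      ≤ ‖α - β‖ * (2 ^ (dα * dβ) * Mα ^ dβ * Mβ ^ dα) := by
    have hLc : (0:ℝ) ≤ |((cα : ℤ) : ℝ)| ^ dβ * |((cβ : ℤ) : ℝ)| ^ dα := by positivity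
    have hQ' : Q ≤ (2 ^ (dα * dβ) * PA ^ dβ * PB ^ dα) / 2 := le_trans hQle hRmle
    calc |((cα : ℤ) : ℝ)| ^ dβ * |((cβ : ℤ) : ℝ)| ^ dα * (‖α - β‖ * Q)
        ≤ |((cα : ℤ) : ℝ)| ^ dβ * |((cβ : ℤ) : ℝ)| ^ dα
          * (‖α - β‖ * ((2 ^ (dα * dβ) * PA ^ dβ * PB ^ dα) / 2)) := by
          refine mul_le_mul_of_nonneg_left ?_ hLc
          exact mul_le_mul_of_nonneg_left hQ' (norm_nonneg _)
    _ = ‖α - β‖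
          * ((2 ^ (dα * dβ) * (|((cα : ℤ) : ℝ)| * PA) ^ dβ * (|((cβ : ℤ) : ℝ)| * PB) ^ dα) / 2) := by
        rw [mul_pow, mul_pow]
        ring
    _ = ‖α - β‖ * ((2 ^ (dα * dβ) * Mα ^ dβ * Mβ ^ dα) / 2) := by
        rw [hMαPA, hMβPB]
    _ ≤ ‖α - β‖ * (2 ^ (dα * dβ) * Mα ^ dβ * Mβ ^ dα) := by
        refine mul_le_mul_of_nonneg_left ?_ (norm_nonneg _)
        exact div_le_self (le_of_lt hXpos) one_le_two
  rw [ge_iff_le, div_le_iff₀ hXpos]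
  exact le_trans step1 step2

end MAIN
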